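/- Any invertible reversible non-bireversible Mealy automaton generates an infinite group: if A = (Q, Σ, δ, ρ) is invertible, reversible and not bireversible, then the group of length-preserving bijections of Σ* generated by {ρ_x : x ∈ Q} is infinite. -/

import Mathlib

/-!
Mealy automata: common definitions.

A Mealy automaton on stateset `Q` and alphabet `Γ` is given by transition
functions `δ : Γ → Q → Q` (for each input letter) and output functions
`ρ : Q → Γ → Γ` (for each state); it has a transition `x —i|j→ y` exactly
when `δ i x = y` and `ρ x i = j`.
-/

/-- Extended output function `ρ_x : Γ* → Γ*` of a single state. -/
def rhoStar {Q Γ : Type*} (δ : Γ → Q → Q) (ρ : Q → Γ → Γ) : Q → List Γ → List Γ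
  | _, [] => []
  | x, i :: s => ρ x i :: rhoStar δ ρ (δ i x) s

/-- `ρ_u : Γ* → Γ*` for a word `u = x₁⋯x_n` of states: `ρ_u = ρ_{x_n} ∘ ⋯ ∘ ρ_{x₁}`. -/
def rhoWord {Q Γ : Type*} (δ : Γ → Q → Q) (ρ : Q → Γ → Γ) : List Q → List Γ → List Γ
  | [], s => s
  | x :: u, s => rhoWord δ ρ u (rhoStar δ ρ x s)

/-- `ρ_u : Γ → Γ` on single letters (the output function of the power automaton). -/
def rhoLetter {Q Γ : Type*} (ρ : Q → Γ → Γ) : List Q → Γ → Γ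
  | [], i => i
  | x :: u, i => rhoLetter ρ u (ρ x i)

/-- Extended transition function `δ_i : Q* → Q*` (the transition function of powers). -/
def deltaStar {Q Γ : Type*} (δ : Γ → Q → Q) (ρ : Q → Γ → Γ) : Γ → List Q → List Q
  | _, [] => []
  | i, x :: u => δ i x :: deltaStar δ ρ (ρ x i) u

/-- Sequential application `δ_s = δ_{s_n} ∘ ⋯ ∘ δ_{s₁}` of the letters of a word `s`. -/
def applyWord {S Γ : Type*} (d : Γ → S → S) : List Γ → S → S
  | [], x => x
  | i :: s, x => applyWord d s (d i x)

/-- The orbit `{δ_s(x) : s ∈ Γ*}` of a state: for reversible automata this is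
exactly the (strongly) connected component of `x`. -/
def orbitOf {S Γ : Type*} (d : Γ → S → S) (x : S) : Set S :=
  {y | ∃ s : List Γ, applyWord d s x = y}

/-- An automaton is invertible when every output function is a permutation. -/
def MInvertible {Q Γ : Type*} (ρ : Q → Γ → Γ) : Prop := ∀ x, Function.Bijective (ρ x)

/-- An automaton is reversible when every transition function is a permutation. -/
def MReversible {Q Γ : Type*} (δ : Γ → Q → Q) : Prop := ∀ i, Function.Bijective (δ i)

/-- Coreversibility: `δ_i(y) = δ_{i'}(z)` and `ρ_y(i) = ρ_z(i')` imply `y = z`. -/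
def MCoreversible {Q Γ : Type*} (δ : Γ → Q → Q) (ρ : Q → Γ → Γ) : Prop :=
  ∀ y z : Q, ∀ i i' : Γ, δ i y = δ i' z → ρ y i = ρ z i' → y = z

/-- Bireversible: invertible, reversible and coreversible. -/
def MBireversible {Q Γ : Type*} (δ : Γ → Q → Q) (ρ : Q → Γ → Γ) : Prop :=
  MInvertible ρ ∧ MReversible δ ∧ MCoreversible δ ρ

/-- Connectedness: every state is reachable from every state. -/
def MConnected {Q Γ : Type*} (δ : Γ → Q → Q) : Prop :=
  ∀ x y : Q, ∃ s : List Γ, applyWord δ s x = y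

/-- Invertibility of a component `C` (as an automaton with stateset `C`). -/
def CompInvertible {S Γ : Type*} (r : S → Γ → Γ) (C : Set S) : Prop :=
  ∀ x ∈ C, Function.Bijective (r x)

/-- Reversibility of a component `C`: each transition function permutes `C`. -/
def CompReversible {S Γ : Type*} (d : Γ → S → S) (C : Set S) : Prop :=
  ∀ i : Γ, Set.BijOn (d i) C C

/-- Coreversibility of a component `C` (as an automaton with stateset `C`). -/
def CompCoreversible {S Γ : Type*} (d : Γ → S → S) (r : S → Γ → Γ) (C : Set S) : Prop :=
  ∀ y ∈ C, ∀ z ∈ C, ∀ i i' : Γ, d i y = d i' z → r y i = r z i' → y = z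

/-- Bireversibility of a component `C` (as an automaton with stateset `C`). -/
def CompBireversible {S Γ : Type*} (d : Γ → S → S) (r : S → Γ → Γ) (C : Set S) : Prop :=
  CompInvertible r C ∧ CompReversible d C ∧ CompCoreversible d r C

/-- Transition functions of the product `A × B` of two Mealy automata. -/
def prodD {Q Q' Γ : Type*} (δ : Γ → Q → Q) (ρ : Q → Γ → Γ) (δ' : Γ → Q' → Q') :
    Γ → Q × Q' → Q × Q' :=
  fun i p => (δ i p.1, δ' (ρ p.1 i) p.2)

/-- Output functions of the product `A × B` of two Mealy automata. -/
def prodR {Q Q' Γ : Type*} (ρ : Q → Γ → Γ) (ρ' : Q' → Γ → Γ) : Q × Q' → Γ → Γ :=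
  fun p i => ρ' p.2 (ρ p.1 i)

/-- `u^n`: the `n`-fold concatenation of a word with itself. -/
def wordPow {Q : Type*} (u : List Q) : ℕ → List Q
  | 0 => []
  | n + 1 => u ++ wordPow u n


section AuxMealy

variable {Q Γ : Type*}

/-- Cross relation: output of `u` on `j :: s`. -/
lemma rhoWord_cons_cross (δ : Γ → Q → Q) (ρ : Q → Γ → Γ) :
    ∀ (u : List Q) (j : Γ) (s : List Γ),
      rhoWord δ ρ u (j :: s) = rhoLetter ρ u j :: rhoWord δ ρ (deltaStar δ ρ j u) s
  | [], _, _ => rfl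
  | x :: v, j, s =>
      rhoWord_cons_cross δ ρ v (ρ x j) (rhoStar δ ρ (δ j x) s)

lemma deltaStar_inj (δ : Γ → Q → Q) (ρ : Q → Γ → Γ) (hRev : MReversible δ) :
    ∀ (l : List Q) (j : Γ) (l' : List Q), deltaStar δ ρ j l = deltaStar δ ρ j l' → l = l'
  | [], _, [], _ => rfl
  | [], _, _ :: _, h => by simp [deltaStar] at h
  | _ :: _, _, [], h => by simp [deltaStar] at h
  | x :: l, j, x' :: l', h => by
      simp only [deltaStar, List.cons.injEq] at h
      obtain ⟨h1, h2⟩ := h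
      have hx : x = x' := (hRev j).injective h1
      subst hx
      rw [deltaStar_inj δ ρ hRev l (ρ x j) l' h2]

lemma deltaStar_length (δ : Γ → Q → Q) (ρ : Q → Γ → Γ) :
    ∀ (l : List Q) (j : Γ), (deltaStar δ ρ j l).length = l.length
  | [], _ => rfl
  | x :: l, j => by
      simp only [deltaStar, List.length_cons, deltaStar_length δ ρ l (ρ x j)]

variable [Nonempty Γ]

/-- Transition functions of the inverse automaton. -/
noncomputable def invMD (δ : Γ → Q → Q) (ρ : Q → Γ → Γ) : Γ → Q → Q :=
  fun j x => δ (Function.invFun (ρ x) j) x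

/-- Output functions of the inverse automaton. -/
noncomputable def invMR (ρ : Q → Γ → Γ) : Q → Γ → Γ :=
  fun x => Function.invFun (ρ x)

lemma invStar_left (δ : Γ → Q → Q) (ρ : Q → Γ → Γ) (hInv : MInvertible ρ) :
    ∀ (s : List Γ) (x : Q),
      rhoStar (invMD δ ρ) (invMR ρ) x (rhoStar δ ρ x s) = s
  | [], _ => rfl
  | i :: s, x => by
      have h1 : Function.invFun (ρ x) (ρ x i) = i :=
        Function.leftInverse_invFun (hInv x).1 i
      simp only [rhoStar, invMR, invMD, h1, List.cons.injEq, true_and]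
      exact invStar_left δ ρ hInv s (δ i x)

lemma invStar_right (δ : Γ → Q → Q) (ρ : Q → Γ → Γ) (hInv : MInvertible ρ) :
    ∀ (t : List Γ) (x : Q),
      rhoStar δ ρ x (rhoStar (invMD δ ρ) (invMR ρ) x t) = t
  | [], _ => rfl
  | j :: t, x => by
      have h1 : ρ x (Function.invFun (ρ x) j) = j :=
        Function.rightInverse_invFun (hInv x).2 j
      simp only [rhoStar, invMR, invMD, h1, List.cons.injEq, true_and]
      exact invStar_right δ ρ hInv t (δ (Function.invFun (ρ x) j) x)

lemma rhoStar_bijective (δ : Γ → Q → Q) (ρ : Q → Γ → Γ) (hInv : MInvertible ρ) (x : Q) :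
    Function.Bijective (rhoStar δ ρ x) :=
  Function.bijective_iff_has_inverse.2
    ⟨rhoStar (invMD δ ρ) (invMR ρ) x,
      fun s => invStar_left δ ρ hInv s x, fun t => invStar_right δ ρ hInv t x⟩

lemma rhoWord_replicate (δ : Γ → Q → Q) (ρ : Q → Γ → Γ) (y : Q) :
    ∀ (k : ℕ) (t : List Γ),
      rhoWord δ ρ (List.replicate k y) t = (rhoStar δ ρ y)^[k] t
  | 0, _ => rfl
  | k + 1, t => by
      rw [List.replicate_succ, Function.iterate_succ_apply]
      exact rhoWord_replicate δ ρ y k (rhoStar δ ρ y t)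

lemma end_pow_apply {α : Type*} (f : Function.End α) :
    ∀ (n : ℕ) (x : α), (f ^ n) x = f^[n] x
  | 0, _ => rfl
  | n + 1, x => by
      exact end_pow_apply f n (f x)

/-- Identity maps propagate along sections. -/
lemma rhoWord_id_section (δ : Γ → Q → Q) (ρ : Q → Γ → Γ) (v : List Q)
    (hv : ∀ s, rhoWord δ ρ v s = s) (j : Γ) :
    ∀ s, rhoWord δ ρ (deltaStar δ ρ j v) s = s := by
  intro s
  have h := rhoWord_cons_cross δ ρ v j s
  rw [hv (j :: s)] at h
  exact (List.cons.injEq _ _ _ _ ▸ h).2.symm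

end AuxMealy

/-- Any invertible reversible non-bireversible Mealy
automaton generates an infinite group: the group of (length-preserving)
bijections of `Γ*` generated by the maps `ρ_x` — i.e. the closure of the
generators together with their inverses under composition — is infinite. -/
theorem infinite_group_of_invertible_reversible_nonbireversible
    {Q Γ : Type*} [Fintype Q] [Fintype Γ] [Nonempty Q] [Nonempty Γ]
    (δ : Γ → Q → Q) (ρ : Q → Γ → Γ)
    (hInv : MInvertible ρ) (hRev : MReversible δ) (hNotBir : ¬ MBireversible δ ρ) :
    Set.Infinite
      ((Submonoid.closure
          {f : Function.End (List Γ) |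
            ∃ x : Q, f = rhoStar δ ρ x ∨ f = Function.invFun (rhoStar δ ρ x)} :
          Submonoid (Function.End (List Γ))) : Set (Function.End (List Γ))) := by
  classical
  -- extract failure of coreversibility
  have hNC : ¬ MCoreversible δ ρ := fun h => hNotBir ⟨hInv, hRev, h⟩
  rw [MCoreversible] at hNC
  push_neg at hNC
  obtain ⟨y, z, i, i', hδ, hρ, hyz⟩ := hNC
  have hii : i ≠ i' := by
    rintro rfl
    exact hyz ((hRev i).injective hδ)
  by_contra hfin
  rw [Set.not_infinite] at hfin
  haveI := hfin.to_subtype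
  set M := (Submonoid.closure
      {f : Function.End (List Γ) |
        ∃ x : Q, f = rhoStar δ ρ x ∨ f = Function.invFun (rhoStar δ ρ x)} :
      Submonoid (Function.End (List Γ))) with hM
  set f : Function.End (List Γ) := rhoStar δ ρ y with hfdef
  have hfM : f ∈ M := Submonoid.subset_closure ⟨y, Or.inl rfl⟩
  -- pigeonhole on powers of f
  obtain ⟨a, b, hab, hEq⟩ := Finite.exists_ne_map_eq_of_infinite
      (fun n : ℕ => (⟨f ^ n, pow_mem hfM n⟩ : (M : Set (Function.End (List Γ)))))
  have hEq' : f ^ a = f ^ b := congrArg Subtype.val hEq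
  obtain ⟨p, q, hpq, hpqEq⟩ : ∃ p q, p < q ∧ f ^ p = f ^ q := by
    rcases hab.lt_or_gt with h | h
    · exact ⟨a, b, h, hEq'⟩
    · exact ⟨b, a, h, hEq'.symm⟩
  have hbij : Function.Bijective (rhoStar δ ρ y) := rhoStar_bijective δ ρ hInv y
  set m := q - p with hmdef
  have hm1 : 1 ≤ m := by omega
  have hmid : ∀ t, (rhoStar δ ρ y)^[m] t = t := by
    intro t
    obtain ⟨s, hs⟩ := (hbij.iterate p).surjective t
    have h1 : (rhoStar δ ρ y)^[p] s = (rhoStar δ ρ y)^[q] s := by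
      rw [← end_pow_apply f p s, ← end_pow_apply f q s, hpqEq]
    have h2 : (rhoStar δ ρ y)^[q] s = (rhoStar δ ρ y)^[m] ((rhoStar δ ρ y)^[p] s) := by
      rw [← Function.iterate_add_apply]
      congr 1
      omega
    rw [← hs, ← h2, ← h1]
  -- the witness state-word
  set u : List Q := z :: List.replicate (m - 1) y with hudef
  have hA : ∀ s, rhoWord δ ρ u (i' :: s) = i :: s := by
    intro s
    show rhoWord δ ρ (List.replicate (m - 1) y) (rhoStar δ ρ z (i' :: s)) = i :: s
    have h1 : rhoStar δ ρ z (i' :: s) = rhoStar δ ρ y (i :: s) := by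
      show ρ z i' :: rhoStar δ ρ (δ i' z) s = ρ y i :: rhoStar δ ρ (δ i y) s
      rw [← hρ, ← hδ]
    rw [h1, rhoWord_replicate, ← Function.iterate_succ_apply, Nat.succ_eq_add_one,
      Nat.sub_add_cancel hm1]
    exact hmid _
  have hB : ∀ s, rhoWord δ ρ (deltaStar δ ρ i' u) s = s := by
    intro s
    have h := rhoWord_cons_cross δ ρ u i' s
    rw [hA s] at h
    exact (List.cons.injEq _ _ _ _ ▸ h).2.symm
  have hIter : ∀ t s, rhoWord δ ρ ((deltaStar δ ρ i')^[t + 1] u) s = s := by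
    intro t
    induction t with
    | zero => simpa using hB
    | succ t ih =>
        intro s
        rw [Function.iterate_succ_apply']
        exact rhoWord_id_section δ ρ _ ih i' s
  -- pigeonhole on iterates of deltaStar i'
  have hlen : ∀ t, ((deltaStar δ ρ i')^[t] u).length = u.length := by
    intro t
    induction t with
    | zero => rfl
    | succ t ih => rw [Function.iterate_succ_apply', deltaStar_length]; exact ih
  haveI : Finite {l : List Q | l.length = u.length} :=
    (List.finite_length_eq Q u.length).to_subtype
  obtain ⟨a', b', hab', hEq2⟩ := Finite.exists_ne_map_eq_of_infinite
      (fun n : ℕ => (⟨(deltaStar δ ρ i')^[n] u, hlen n⟩ : {l : List Q | l.length = u.length}))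
  have hEq2' : (deltaStar δ ρ i')^[a'] u = (deltaStar δ ρ i')^[b'] u :=
    congrArg Subtype.val hEq2
  have hDinj : Function.Injective (deltaStar δ ρ i') := fun l l' h =>
    deltaStar_inj δ ρ hRev l i' l' h
  obtain ⟨c, d, hcd, hcdEq⟩ :
      ∃ c d, c < d ∧ (deltaStar δ ρ i')^[c] u = (deltaStar δ ρ i')^[d] u := by
    rcases hab'.lt_or_gt with h | h
    · exact ⟨a', b', h, hEq2'⟩
    · exact ⟨b', a', h, hEq2'.symm⟩
  have hcycle : (deltaStar δ ρ i')^[d - c] u = u := by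
    apply hDinj.iterate c
    rw [← Function.iterate_add_apply]
    have : c + (d - c) = d := by omega
    rw [this, hcdEq]
  have huid : ∀ s, rhoWord δ ρ u s = s := by
    intro s
    have h1 : d - c - 1 + 1 = d - c := by omega
    rw [← hcycle, ← h1]
    exact hIter _ s
  have : (i : Γ) :: [] = i' :: [] := by
    rw [← hA [], huid]
  exact hii (List.head_eq_of_cons_eq this)
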